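/- Let A be a symmetric matrix over F_2 with A_{ii} = 1 for some index i, and let a_i denote its i-th column. Then the matrix B := A + a_i a_iᵀ satisfies rank(B) = rank(A) − 1, and the i-th row and i-th column of B are zero. -/

import Mathlib

/-- If A is symmetric over F₂ with A i i = 1, and aᵢ is the i-th
column of A, then B = A + aᵢ aᵢᵀ has rank(A) − 1 and zero i-th row and column. -/
theorem stmt5 (N : ℕ) (A : Matrix (Fin N) (Fin N) (ZMod 2)) (hsymm : A.IsSymm)
    (i : Fin N) (hii : A i i = 1) :
    (A + Matrix.vecMulVec (fun j => A j i) (fun j => A j i)).rank + 1 = A.rank ∧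
    (∀ j, (A + Matrix.vecMulVec (fun j => A j i) (fun j => A j i)) i j = 0) ∧
    (∀ j, (A + Matrix.vecMulVec (fun j => A j i) (fun j => A j i)) j i = 0) := by
  classical
  set a : Fin N → ZMod 2 := fun j => A j i with ha
  set B : Matrix (Fin N) (Fin N) (ZMod 2) := A + Matrix.vecMulVec a a with hB
  have hsym : ∀ p q, A p q = A q p := fun p q => (hsymm.apply q p)
  have two0 : ∀ x : ZMod 2, x + x = 0 := fun x => CharTwo.add_self_eq_zero x
  have hBrow : ∀ j, B i j = 0 := by
    intro j
    have : B i j = A i j + A i i * A j i := rfl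
    rw [this, hii, one_mul, hsym j i, two0]
  have hBcol : ∀ j, B j i = 0 := by
    intro j
    have : B j i = A j i + A j i * A i i := rfl
    rw [this, hii, mul_one, two0]
  refine ⟨?_, hBrow, hBcol⟩
  -- rank part
  have hBmv : ∀ x, B.mulVec x = A.mulVec x + (dotProduct a x) • a := by
    intro x
    funext p
    simp only [hB, Matrix.add_mulVec, Pi.add_apply, Pi.smul_apply, smul_eq_mul]
    congr 1
    simp only [Matrix.mulVec, dotProduct, Matrix.vecMulVec_apply]
    rw [Finset.sum_mul]
    ring_nf
  have hAmv : ∀ x, A.mulVec x = B.mulVec x + (dotProduct a x) • a := by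
    intro x
    rw [hBmv]
    funext p
    simp only [Pi.add_apply, Pi.smul_apply, smul_eq_mul]
    rw [add_assoc, two0, add_zero]
  have haW : a ∈ LinearMap.range A.mulVecLin := by
    refine ⟨Pi.single i 1, ?_⟩
    funext p
    simp [Matrix.mulVecLin_apply, Matrix.mulVec_single, ha]
  have hVi : ∀ v ∈ LinearMap.range B.mulVecLin, v i = 0 := by
    rintro v ⟨x, rfl⟩
    simp only [Matrix.mulVecLin_apply, Matrix.mulVec, dotProduct]
    apply Finset.sum_eq_zero
    intro q _
    rw [hBrow q, zero_mul]
  set V := LinearMap.range B.mulVecLin with hV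
  set W := LinearMap.range A.mulVecLin with hW
  set S := Submodule.span (ZMod 2) {a} with hS
  have ha0 : a ≠ 0 := by
    intro h
    have : a i = 0 := by rw [h]; rfl
    rw [ha] at this
    simp only [hii] at this
    exact one_ne_zero this
  have hWeq : W = V ⊔ S := by
    apply le_antisymm
    · rintro v ⟨x, rfl⟩
      rw [Matrix.mulVecLin_apply, hAmv x]
      exact Submodule.add_mem _
        (Submodule.mem_sup_left ⟨x, rfl⟩)
        (Submodule.mem_sup_right (Submodule.smul_mem _ _ (Submodule.mem_span_singleton_self a)))
    · apply sup_le
      · rintro v ⟨x, rfl⟩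
        rw [Matrix.mulVecLin_apply, hBmv x]
        exact Submodule.add_mem _ ⟨x, rfl⟩ (Submodule.smul_mem _ _ haW)
      · rw [hS, Submodule.span_singleton_le_iff_mem]
        exact haW
  have hinf : V ⊓ S = ⊥ := by
    rw [eq_bot_iff]
    rintro v ⟨hv1, hv2⟩
    obtain ⟨c, rfl⟩ := Submodule.mem_span_singleton.mp hv2
    have h1 : (c • a) i = 0 := hVi _ hv1
    have h2 : (c • a) i = c := by
      simp only [Pi.smul_apply, smul_eq_mul, ha, hii, mul_one]
    rw [h2] at h1
    rw [h1, zero_smul]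
    exact Submodule.zero_mem _
  have hdim := Submodule.finrank_sup_add_finrank_inf_eq V S
  rw [hinf, ← hWeq] at hdim
  have hSrank : Module.finrank (ZMod 2) S = 1 := finrank_span_singleton ha0
  simp only [finrank_bot, add_zero, hSrank] at hdim
  show Module.finrank (ZMod 2) V + 1 = Module.finrank (ZMod 2) W
  omega
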